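/- Let π = (v_0, v_1, ..., v_m) be a path in a weighted graph with nonnegative edge weights and total weight L. Then there exists an index i with 0 ≤ i < m such that the prefix subpath from v_0 to v_i has weight at most L/2 and the suffix subpath from v_{i+1} to v_m has weight at most L/2 (so π splits into a prefix of weight ≤ L/2, a single edge (v_i, v_{i+1}), and a suffix of weight ≤ L/2). -/

import Mathlib

/-- A path of total weight `L` splits into a prefix of weight `≤ L/2`, a single edge, and a
suffix of weight `≤ L/2`. The path `v_0, …, v_m` is represented by its edge weights
`w j = w(v_j, v_{j+1})` for `j < m`. -/
theorem stmt_3 (m : ℕ) (hm : 1 ≤ m) (w : ℕ → ℝ) (hw : ∀ j, 0 ≤ w j)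
    (L : ℝ) (hL : L = ∑ j ∈ Finset.range m, w j) :
    ∃ i < m, (∑ j ∈ Finset.range i, w j) ≤ L / 2 ∧
      (∑ j ∈ Finset.Ico (i + 1) m, w j) ≤ L / 2 := by
  classical
  have hL0 : 0 ≤ L := hL ▸ Finset.sum_nonneg fun j _ => hw j
  have hP : ∃ k, L / 2 ≤ ∑ j ∈ Finset.range (k + 1), w j := by
    refine ⟨m - 1, ?_⟩
    rw [Nat.sub_add_cancel hm, ← hL]
    linarith
  set i := Nat.find hP with hi
  have hspec : L / 2 ≤ ∑ j ∈ Finset.range (i + 1), w j := Nat.find_spec hP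
  have him : i < m := by
    by_contra h
    push_neg at h
    have : m - 1 < i := by omega
    have := Nat.find_min hP this
    rw [Nat.sub_add_cancel hm, ← hL] at this
    linarith
  refine ⟨i, him, ?_, ?_⟩
  · rcases Nat.eq_zero_or_pos i with h0 | h0
    · simp [h0]; linarith
    · have := Nat.find_min hP (show i - 1 < i by omega)
      rw [Nat.sub_add_cancel h0] at this
      linarith
  · rw [Finset.sum_Ico_eq_sub _ him, ← hL]
    linarith
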